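/- Let f : P_2(ℝ^d) → ℝ be L-differentiable and define f̃ : P_2(ℝ^d × ℝ) → ℝ by f̃(μ̃) := f(μ̃(· × ℝ)) (i.e. f applied to the first marginal). Then for any μ ∈ P_2(ℝ^d) at which f is L-differentiable, f̃ is L-differentiable at μ × δ₀ with D^L f̃(μ × δ₀)(x, r) = (D^L f(μ)(x), 0) for (x, r) ∈ ℝ^d × ℝ. -/

import Mathlib

open MeasureTheory Filter Set
open scoped Topology ENNReal RealInnerProductSpace

/-- L-differentiability of `f` at `μ` with Lions derivative `γ`. -/
def LDiffAt {d : ℕ} (f : Measure (EuclideanSpace ℝ (Fin d)) → ℝ)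
    (μ : Measure (EuclideanSpace ℝ (Fin d)))
    (γ : EuclideanSpace ℝ (Fin d) → EuclideanSpace ℝ (Fin d)) : Prop :=
  MemLp γ 2 μ ∧
  ∀ ε > (0 : ℝ), ∃ δ > (0 : ℝ),
    ∀ φ : EuclideanSpace ℝ (Fin d) → EuclideanSpace ℝ (Fin d),
      MemLp φ 2 μ → Real.sqrt (∫ x, ‖φ x‖ ^ 2 ∂μ) ≤ δ →
      abs (f (Measure.map (fun x => x + φ x) μ) - f μ - ∫ x, ⟪γ x, φ x⟫ ∂μ)
        ≤ ε * Real.sqrt (∫ x, ‖φ x‖ ^ 2 ∂μ)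

/-- We identify `ℝᵈ × ℝ` with `ℝ^{d+1}`, the pair `(x, r)` corresponding to
`Fin.snoc x r`. -/
noncomputable def pairEmbed {d : ℕ} (p : EuclideanSpace ℝ (Fin d) × ℝ) :
    EuclideanSpace ℝ (Fin (d + 1)) :=
  (EuclideanSpace.equiv (Fin (d + 1)) ℝ).symm
    (Fin.snoc (EuclideanSpace.equiv (Fin d) ℝ p.1) p.2)

/-- The first marginal projection `ℝ^{d+1} → ℝᵈ`. -/
noncomputable def firstMarginal {d : ℕ} (x : EuclideanSpace ℝ (Fin (d + 1))) :
    EuclideanSpace ℝ (Fin d) :=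
  (EuclideanSpace.equiv (Fin d) ℝ).symm
    (Fin.init (EuclideanSpace.equiv (Fin (d + 1)) ℝ x))


section Helpers
variable {d : ℕ}

lemma fm_pe (x : EuclideanSpace ℝ (Fin d)) (r : ℝ) :
    firstMarginal (pairEmbed (x, r)) = x := by
  simp [firstMarginal, pairEmbed, Fin.init_snoc]
  change (WithLp.toLp 2 (Fin.init (Fin.snoc (α := fun _ => ℝ) x.ofLp r)) : EuclideanSpace ℝ (Fin d)) = x
  rw [Fin.init_snoc]

lemma fm_add (a b : EuclideanSpace ℝ (Fin (d+1))) :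
    firstMarginal (a + b) = firstMarginal a + firstMarginal b := by
  ext i
  simp [firstMarginal, Fin.init]

lemma cont_fm : Continuous (firstMarginal (d := d)) := by
  unfold firstMarginal
  refine ((EuclideanSpace.equiv (Fin d) ℝ).symm.continuous).comp ?_
  exact (continuous_pi fun i => (continuous_apply _).comp
    (EuclideanSpace.equiv (Fin (d+1)) ℝ).continuous)

lemma cont_pe0 : Continuous (fun x : EuclideanSpace ℝ (Fin d) => pairEmbed (x, 0)) := by
  unfold pairEmbed
  refine ((EuclideanSpace.equiv (Fin (d+1)) ℝ).symm.continuous).comp ?_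
  refine continuous_pi fun i => ?_
  induction i using Fin.lastCases with
  | last => simpa [Fin.snoc_last] using continuous_const
  | cast i => simpa [Fin.snoc_castSucc] using
      (show Continuous fun a : EuclideanSpace ℝ (Fin d) => a.ofLp i from (continuous_apply _).comp (EuclideanSpace.equiv (Fin d) ℝ).continuous)

lemma cont_pe : Continuous (pairEmbed (d := d)) := by
  unfold pairEmbed
  refine ((EuclideanSpace.equiv (Fin (d+1)) ℝ).symm.continuous).comp ?_
  refine continuous_pi fun i => ?_
  induction i using Fin.lastCases with
  | last => simpa [Fin.snoc_last] using continuous_snd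
  | cast i => simpa [Fin.snoc_castSucc] using
      (show Continuous fun a : EuclideanSpace ℝ (Fin d) × ℝ => a.1.ofLp i from ((continuous_apply _).comp (EuclideanSpace.equiv (Fin d) ℝ).continuous).comp continuous_fst)

lemma norm_pe0 (a : EuclideanSpace ℝ (Fin d)) : ‖pairEmbed (a, 0)‖ = ‖a‖ := by
  rw [EuclideanSpace.norm_eq, EuclideanSpace.norm_eq]
  congr 1
  rw [Fin.sum_univ_castSucc]
  simp [pairEmbed, Fin.snoc_castSucc, Fin.snoc_last]

lemma norm_fm_le (z : EuclideanSpace ℝ (Fin (d+1))) : ‖firstMarginal z‖ ≤ ‖z‖ := by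
  rw [EuclideanSpace.norm_eq, EuclideanSpace.norm_eq]
  apply Real.sqrt_le_sqrt
  rw [Fin.sum_univ_castSucc]
  have : (0:ℝ) ≤ ‖z (Fin.last d)‖ ^ 2 := by positivity
  have h2 : ∀ i : Fin d, ‖firstMarginal z i‖ = ‖z i.castSucc‖ := by
    intro i; simp [firstMarginal, Fin.init]
  simp only [h2]
  linarith

lemma inner_pe0 (a : EuclideanSpace ℝ (Fin d)) (z : EuclideanSpace ℝ (Fin (d+1))) :
    ⟪pairEmbed (a, 0), z⟫ = ⟪a, firstMarginal z⟫ := by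
  rw [PiLp.inner_apply, PiLp.inner_apply, Fin.sum_univ_castSucc]
  simp [pairEmbed, firstMarginal, Fin.init, Fin.snoc_castSucc, Fin.snoc_last]

end Helpers

/-- Lifting an L-differentiable `f : P₂(ℝᵈ) → ℝ` to `f̃(μ̃) := f(μ̃(· × ℝ))` on
`P₂(ℝᵈ × ℝ) = P₂(ℝ^{d+1})`: `f̃` is L-differentiable at `μ × δ₀` with
`D^L f̃(μ × δ₀)(x, r) = (D^L f(μ)(x), 0)`. -/
theorem lift_LDiffAt {d : ℕ}
    (f : Measure (EuclideanSpace ℝ (Fin d)) → ℝ)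
    (μ : Measure (EuclideanSpace ℝ (Fin d))) [IsProbabilityMeasure μ]
    (hμ2 : MemLp (id : EuclideanSpace ℝ (Fin d) → EuclideanSpace ℝ (Fin d)) 2 μ)
    (γ : EuclideanSpace ℝ (Fin d) → EuclideanSpace ℝ (Fin d))
    (hf : LDiffAt f μ γ) :
    LDiffAt (fun m : Measure (EuclideanSpace ℝ (Fin (d + 1))) =>
        f (Measure.map firstMarginal m))
      (Measure.map pairEmbed (μ.prod (Measure.dirac (0 : ℝ))))
      (fun x => pairEmbed (γ (firstMarginal x), 0)) := by
  set e : EuclideanSpace ℝ (Fin d) → EuclideanSpace ℝ (Fin (d+1)) :=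
    fun x => pairEmbed (x, 0) with he_def
  have he : Measurable e := cont_pe0.measurable
  have hfm : Measurable (firstMarginal (d := d)) := cont_fm.measurable
  -- the base measure is map e μ
  have hν : Measure.map pairEmbed (μ.prod (Measure.dirac (0 : ℝ))) = Measure.map e μ := by
    rw [Measure.prod_dirac, Measure.map_map cont_pe.measurable
      measurable_prodMk_right]
    rfl
  -- first marginal of map e μ is μ
  have hfmν : Measure.map firstMarginal (Measure.map e μ) = μ := by
    rw [Measure.map_map hfm he]
    have : firstMarginal ∘ e = id := funext fun x => fm_pe x 0
    rw [this, Measure.map_id]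
  have hγsm : AEStronglyMeasurable γ μ := hf.1.1
  have hγν : AEStronglyMeasurable
      (fun y => pairEmbed (γ (firstMarginal y), 0)) (Measure.map e μ) := by
    have h1 : AEStronglyMeasurable (γ ∘ firstMarginal) (Measure.map e μ) := by
      refine AEStronglyMeasurable.comp_measurable ?_ hfm
      rwa [hfmν]
    exact cont_pe0.comp_aestronglyMeasurable h1
  rw [hν]
  constructor
  · rw [memLp_map_measure_iff hγν he.aemeasurable]
    have heq : ((fun y => pairEmbed (γ (firstMarginal y), 0)) ∘ e)
        = fun x => pairEmbed (γ x, 0) := by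
      funext x; simp only [Function.comp, he_def, fm_pe]
    rw [heq]
    refine hf.1.of_le (cont_pe0.comp_aestronglyMeasurable hγsm) ?_
    filter_upwards with x
    rw [norm_pe0]
  · intro ε hε
    obtain ⟨δ, hδ, H⟩ := hf.2 ε hε
    refine ⟨δ, hδ, ?_⟩
    intro φt hφt hφtn
    set φ : EuclideanSpace ℝ (Fin d) → EuclideanSpace ℝ (Fin d) :=
      fun x => firstMarginal (φt (e x)) with hφ_def
    have hφte : MemLp (φt ∘ e) 2 μ :=
      (memLp_map_measure_iff hφt.1 he.aemeasurable).1 hφt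
    have hφ : MemLp φ 2 μ := by
      refine hφte.of_le (cont_fm.comp_aestronglyMeasurable hφte.1) ?_
      filter_upwards with x
      exact norm_fm_le _
    -- integral of sq-norms
    have hintle : (∫ x, ‖φ x‖ ^ 2 ∂μ) ≤ ∫ y, ‖φt y‖ ^ 2 ∂(Measure.map e μ) := by
      rw [integral_map (f := fun y => ‖φt y‖ ^ 2) he.aemeasurable ((continuous_norm.pow 2).comp_aestronglyMeasurable hφt.1)]
      refine integral_mono (hφ.norm.integrable_sq) (hφte.norm.integrable_sq) ?_
      intro x
      have := norm_fm_le (φt (e x))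
      simpa [hφ_def] using pow_le_pow_left₀ (norm_nonneg _) this 2
    have hint0 : (0:ℝ) ≤ ∫ x, ‖φ x‖ ^ 2 ∂μ :=
      integral_nonneg fun x => by positivity
    have hsqle : Real.sqrt (∫ x, ‖φ x‖ ^ 2 ∂μ)
        ≤ Real.sqrt (∫ y, ‖φt y‖ ^ 2 ∂(Measure.map e μ)) :=
      Real.sqrt_le_sqrt hintle
    -- measure equality
    have hadd : AEMeasurable (fun y => y + φt y) (Measure.map e μ) :=
      aemeasurable_id.add hφt.1.aemeasurable
    have hmapeq : Measure.map firstMarginal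
        (Measure.map (fun y => y + φt y) (Measure.map e μ))
        = Measure.map (fun x => x + φ x) μ := by
      rw [AEMeasurable.map_map_of_aemeasurable hfm.aemeasurable hadd,
          AEMeasurable.map_map_of_aemeasurable (hfm.comp_aemeasurable hadd) he.aemeasurable]
      congr 1
      funext x
      simp only [Function.comp, fm_add, hφ_def, he_def, fm_pe]
    -- inner product integral
    have hinner : (∫ y, ⟪pairEmbed (γ (firstMarginal y), 0), φt y⟫ ∂(Measure.map e μ))
        = ∫ x, ⟪γ x, φ x⟫ ∂μ := by
      rw [integral_map he.aemeasurable (hγν.inner hφt.1)]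
      congr 1
      funext x
      simp only [he_def, fm_pe, inner_pe0, hφ_def]
    calc |f (Measure.map firstMarginal
            (Measure.map (fun y => y + φt y) (Measure.map e μ)))
          - f (Measure.map firstMarginal (Measure.map e μ))
          - ∫ y, ⟪pairEmbed (γ (firstMarginal y), 0), φt y⟫ ∂(Measure.map e μ)|
        = |f (Measure.map (fun x => x + φ x) μ) - f μ - ∫ x, ⟪γ x, φ x⟫ ∂μ| := by
          rw [hmapeq, hfmν, hinner]
      _ ≤ ε * Real.sqrt (∫ x, ‖φ x‖ ^ 2 ∂μ) := H φ hφ (le_trans hsqle hφtn)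
      _ ≤ ε * Real.sqrt (∫ y, ‖φt y‖ ^ 2 ∂(Measure.map e μ)) :=
          mul_le_mul_of_nonneg_left hsqle (le_of_lt hε)
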